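/- For any two D×D unitary matrices U₁, U₂, any Hermitian H, and ρ_0 = |φ_0⟩⟨φ_0| a rank-one projector, the Riemannian gradients grad f(U) = HUρ_0 − U·sym(U†HUρ_0) satisfy the Lipschitz bound ‖grad f(U₁) − grad f(U₂)‖_F ≤ 4‖H‖·‖U₁ − U₂‖_F. -/

import Mathlib

open Matrix BigOperators
open scoped Matrix.Norms.L2Operator

noncomputable section

/-- Hermitian part `sym(A) = (A + A†)/2`. -/
def msym {D : ℕ} (A : Matrix (Fin D) (Fin D) ℂ) : Matrix (Fin D) (Fin D) ℂ :=
  (1 / 2 : ℂ) • (A + Aᴴ)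

/-- Riemannian gradient `grad f(U) = H U ρ₀ − U sym(U† H U ρ₀)`. -/
def rgrad {D : ℕ} (H U ρ : Matrix (Fin D) (Fin D) ℂ) : Matrix (Fin D) (Fin D) ℂ :=
  H * U * ρ - U * msym (Uᴴ * H * U * ρ)

/-- Frobenius norm. -/
def frob {D : ℕ} (A : Matrix (Fin D) (Fin D) ℂ) : ℝ :=
  Real.sqrt (∑ i, ∑ j, Complex.normSq (A i j))

variable {D : ℕ}


lemma frob_nonneg (A : Matrix (Fin D) (Fin D) ℂ) : 0 ≤ frob A := Real.sqrt_nonneg _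

lemma frob_eq_norm (A : Matrix (Fin D) (Fin D) ℂ) :
    frob A = ‖((WithLp.equiv 2 ((Fin D) × (Fin D) → ℂ)).symm
      (fun p => A p.1 p.2) : EuclideanSpace ℂ (Fin D × Fin D))‖ := by
  rw [EuclideanSpace.norm_eq]
  simp [frob, Fintype.sum_prod_type, Complex.normSq_eq_norm_sq]

lemma frob_add_le (A B : Matrix (Fin D) (Fin D) ℂ) : frob (A + B) ≤ frob A + frob B := by
  simp only [frob_eq_norm]
  have : ((WithLp.equiv 2 ((Fin D) × (Fin D) → ℂ)).symm
      (fun p => (A + B) p.1 p.2) : EuclideanSpace ℂ (Fin D × Fin D))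
      = (WithLp.equiv 2 _).symm (fun p => A p.1 p.2) + (WithLp.equiv 2 _).symm (fun p => B p.1 p.2) := rfl
  rw [this]
  exact norm_add_le _ _

lemma frob_sub_le (A B : Matrix (Fin D) (Fin D) ℂ) : frob (A - B) ≤ frob A + frob B := by
  have := frob_add_le A (-B)
  simpa [sub_eq_add_neg, frob, Complex.normSq] using this

lemma frob_conjTranspose (A : Matrix (Fin D) (Fin D) ℂ) : frob Aᴴ = frob A := by
  unfold frob
  rw [Finset.sum_comm]
  simp [conjTranspose_apply, Complex.normSq]

lemma frob_smul (c : ℂ) (A : Matrix (Fin D) (Fin D) ℂ) : frob (c • A) = ‖c‖ * frob A := by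
  unfold frob
  simp only [Matrix.smul_apply, smul_eq_mul, Complex.normSq_mul, ← Finset.mul_sum]
  rw [Real.sqrt_mul (Complex.normSq_nonneg c), Complex.normSq_eq_norm_sq,
    Real.sqrt_sq (norm_nonneg c)]

lemma frob_msym_le (A : Matrix (Fin D) (Fin D) ℂ) : frob (msym A) ≤ frob A := by
  unfold msym
  rw [frob_smul]
  calc ‖(1/2 : ℂ)‖ * frob (A + Aᴴ) ≤ ‖(1/2 : ℂ)‖ * (frob A + frob Aᴴ) := by
        apply mul_le_mul_of_nonneg_left (frob_add_le _ _) (norm_nonneg _)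
    _ = frob A := by rw [frob_conjTranspose]; simp; ring

lemma sq_norm_col (x : EuclideanSpace ℂ (Fin D)) : ‖x‖ ^ 2 = ∑ i, Complex.normSq (x i) := by
  rw [EuclideanSpace.norm_eq, Real.sq_sqrt (by positivity)]
  simp [Complex.normSq_eq_norm_sq]

lemma frob_mul_le_opnorm (A B : Matrix (Fin D) (Fin D) ℂ) : frob (A * B) ≤ ‖A‖ * frob B := by
  have key : ∀ j, ∑ i, Complex.normSq ((A * B) i j) ≤ ‖A‖ ^ 2 * ∑ i, Complex.normSq (B i j) := by
    intro j
    have h := A.l2_opNorm_mulVec ((EuclideanSpace.equiv (Fin D) ℂ).symm (fun i => B i j))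
    have h2 : ‖((EuclideanSpace.equiv (Fin D) ℂ).symm (A *ᵥ ((EuclideanSpace.equiv (Fin D) ℂ).symm (fun i => B i j))) : EuclideanSpace ℂ (Fin D))‖ ^ 2
        ≤ (‖A‖ * ‖((EuclideanSpace.equiv (Fin D) ℂ).symm (fun i => B i j) : EuclideanSpace ℂ (Fin D))‖) ^ 2 := by
      apply pow_le_pow_left₀ (norm_nonneg _) h
    rw [mul_pow] at h2
    rw [sq_norm_col, sq_norm_col] at h2
    convert h2 using 2
    all_goals simp [Matrix.mul_apply, Matrix.mulVec, dotProduct]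
  have hsum : ∑ i, ∑ j, Complex.normSq ((A * B) i j) ≤ ‖A‖ ^ 2 * ∑ i, ∑ j, Complex.normSq (B i j) := by
    rw [Finset.sum_comm, Finset.sum_comm (s := Finset.univ) (f := fun i j => Complex.normSq (B i j)),
      Finset.mul_sum]
    exact Finset.sum_le_sum fun j _ => key j
  unfold frob
  calc Real.sqrt (∑ i, ∑ j, Complex.normSq ((A * B) i j))
      ≤ Real.sqrt (‖A‖ ^ 2 * ∑ i, ∑ j, Complex.normSq (B i j)) := Real.sqrt_le_sqrt hsum
    _ = ‖A‖ * Real.sqrt (∑ i, ∑ j, Complex.normSq (B i j)) := by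
        rw [Real.sqrt_mul (by positivity), Real.sqrt_sq (norm_nonneg _)]

lemma frob_mul_le_opnorm' (A B : Matrix (Fin D) (Fin D) ℂ) : frob (A * B) ≤ frob A * ‖B‖ := by
  calc frob (A * B) = frob ((A * B)ᴴ) := (frob_conjTranspose _).symm
    _ = frob (Bᴴ * Aᴴ) := by rw [conjTranspose_mul]
    _ ≤ ‖Bᴴ‖ * frob Aᴴ := frob_mul_le_opnorm _ _
    _ = frob A * ‖B‖ := by rw [l2_opNorm_conjTranspose, frob_conjTranspose]; ring

lemma opnorm_one_le : ‖(1 : Matrix (Fin D) (Fin D) ℂ)‖ ≤ 1 := by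
  have h := (1 : Matrix (Fin D) (Fin D) ℂ).l2_opNorm_conjTranspose_mul_self
  simp only [conjTranspose_one, mul_one] at h
  nlinarith [norm_nonneg (1 : Matrix (Fin D) (Fin D) ℂ)]

lemma opnorm_unitary {U : Matrix (Fin D) (Fin D) ℂ}
    (hU : U ∈ Matrix.unitaryGroup (Fin D) ℂ) : ‖U‖ ≤ 1 := by
  have h : Uᴴ * U = 1 := by
    simpa [Matrix.star_eq_conjTranspose] using hU.1
  have h2 := U.l2_opNorm_conjTranspose_mul_self
  rw [h] at h2
  nlinarith [norm_nonneg U, opnorm_one_le (D := D)]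

lemma opnorm_msym_le (B : Matrix (Fin D) (Fin D) ℂ) : ‖msym B‖ ≤ ‖B‖ := by
  unfold msym
  rw [norm_smul]
  calc ‖(1/2 : ℂ)‖ * ‖B + Bᴴ‖ ≤ ‖(1/2 : ℂ)‖ * (‖B‖ + ‖Bᴴ‖) :=
        mul_le_mul_of_nonneg_left (norm_add_le _ _) (norm_nonneg _)
    _ = ‖B‖ := by rw [l2_opNorm_conjTranspose]; simp; ring

lemma msym_sub (A B : Matrix (Fin D) (Fin D) ℂ) : msym A - msym B = msym (A - B) := by
  simp only [msym, conjTranspose_sub, ← smul_sub]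
  congr 1
  abel

lemma rho_herm (φ0 : Fin D → ℂ) : (vecMulVec φ0 (star φ0))ᴴ = vecMulVec φ0 (star φ0) := by
  ext i j
  simp [vecMulVec_apply, conjTranspose_apply, mul_comm]

lemma rho_idem (φ0 : Fin D → ℂ) (hφ0 : star φ0 ⬝ᵥ φ0 = 1) :
    vecMulVec φ0 (star φ0) * vecMulVec φ0 (star φ0) = vecMulVec φ0 (star φ0) := by
  ext i j
  have hsum : ∑ k, star (φ0 k) * φ0 k = 1 := by
    simpa [dotProduct] using hφ0
  simp only [mul_apply, vecMulVec_apply, Pi.star_apply]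
  calc ∑ k, φ0 i * star (φ0 k) * (φ0 k * star (φ0 j))
      = (∑ k, star (φ0 k) * φ0 k) * (φ0 i * star (φ0 j)) := by
        rw [Finset.sum_mul]; congr 1; ext k; ring
    _ = φ0 i * star (φ0 j) := by rw [hsum, one_mul]

lemma opnorm_rho_le (φ0 : Fin D → ℂ) (hφ0 : star φ0 ⬝ᵥ φ0 = 1) :
    ‖vecMulVec φ0 (star φ0)‖ ≤ 1 := by
  have h2 := (vecMulVec φ0 (star φ0)).l2_opNorm_conjTranspose_mul_self
  rw [rho_herm, rho_idem φ0 hφ0] at h2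
  nlinarith [norm_nonneg (vecMulVec φ0 (star φ0))]

/-- Lipschitz bound
`‖grad f(U₁) − grad f(U₂)‖_F ≤ 4‖H‖·‖U₁ − U₂‖_F`. -/

theorem grad_lipschitz (D : ℕ) (H : Matrix (Fin D) (Fin D) ℂ) (hH : H.IsHermitian)
    (φ0 : Fin D → ℂ) (hφ0 : star φ0 ⬝ᵥ φ0 = 1)
    (U₁ U₂ : Matrix (Fin D) (Fin D) ℂ)
    (hU₁ : U₁ ∈ Matrix.unitaryGroup (Fin D) ℂ)
    (hU₂ : U₂ ∈ Matrix.unitaryGroup (Fin D) ℂ) :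
    frob (rgrad H U₁ (vecMulVec φ0 (star φ0)) - rgrad H U₂ (vecMulVec φ0 (star φ0)))
      ≤ 4 * ‖H‖ * frob (U₁ - U₂) := by
  set ρ := vecMulVec φ0 (star φ0) with hρdef
  set Δ := U₁ - U₂ with hΔdef
  set S₁ := msym (U₁ᴴ * H * U₁ * ρ) with hS₁def
  set E := msym (Δᴴ * (H * U₁ * ρ) + U₂ᴴ * H * Δ * ρ) with hEdef
  have hU1n : ‖U₁‖ ≤ 1 := opnorm_unitary hU₁
  have hU2n : ‖U₂‖ ≤ 1 := opnorm_unitary hU₂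
  have hU1cn : ‖U₁ᴴ‖ ≤ 1 := by rw [l2_opNorm_conjTranspose]; exact hU1n
  have hU2cn : ‖U₂ᴴ‖ ≤ 1 := by rw [l2_opNorm_conjTranspose]; exact hU2n
  have hρn : ‖ρ‖ ≤ 1 := opnorm_rho_le φ0 hφ0
  have hH0 : (0:ℝ) ≤ ‖H‖ := norm_nonneg _
  have fΔ0 : (0:ℝ) ≤ frob Δ := frob_nonneg _
  -- algebraic decomposition
  have hA : U₁ᴴ * H * U₁ * ρ - U₂ᴴ * H * U₂ * ρ = Δᴴ * (H * U₁ * ρ) + U₂ᴴ * H * Δ * ρ := by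
    rw [hΔdef, conjTranspose_sub]
    noncomm_ring
  have hS : S₁ - msym (U₂ᴴ * H * U₂ * ρ) = E := by
    rw [hS₁def, hEdef, msym_sub, hA]
  have key : rgrad H U₁ ρ - rgrad H U₂ ρ = H * Δ * ρ - Δ * S₁ - U₂ * E := by
    rw [← hS]
    unfold rgrad
    rw [hS₁def, hΔdef]
    noncomm_ring
  rw [key]
  -- operator norm bounds
  have hHU1ρ : ‖H * U₁ * ρ‖ ≤ ‖H‖ := by
    calc ‖H * U₁ * ρ‖ ≤ ‖H * U₁‖ * ‖ρ‖ := l2_opNorm_mul _ _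
      _ ≤ ‖H * U₁‖ := by nlinarith [norm_nonneg (H * U₁)]
      _ ≤ ‖H‖ * ‖U₁‖ := l2_opNorm_mul _ _
      _ ≤ ‖H‖ := by nlinarith
  have hS1n : ‖S₁‖ ≤ ‖H‖ := by
    rw [hS₁def]
    calc ‖msym (U₁ᴴ * H * U₁ * ρ)‖ ≤ ‖U₁ᴴ * H * U₁ * ρ‖ := opnorm_msym_le _
      _ ≤ ‖U₁ᴴ * H * U₁‖ * ‖ρ‖ := l2_opNorm_mul _ _
      _ ≤ ‖U₁ᴴ * H * U₁‖ := by nlinarith [norm_nonneg (U₁ᴴ * H * U₁)]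
      _ ≤ ‖U₁ᴴ * H‖ * ‖U₁‖ := l2_opNorm_mul _ _
      _ ≤ ‖U₁ᴴ * H‖ := by nlinarith [norm_nonneg (U₁ᴴ * H)]
      _ ≤ ‖U₁ᴴ‖ * ‖H‖ := l2_opNorm_mul _ _
      _ ≤ ‖H‖ := by nlinarith
  have hU2H : ‖U₂ᴴ * H‖ ≤ ‖H‖ := by
    calc ‖U₂ᴴ * H‖ ≤ ‖U₂ᴴ‖ * ‖H‖ := l2_opNorm_mul _ _
      _ ≤ ‖H‖ := by nlinarith
  -- Frobenius bounds on the three pieces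
  have b1 : frob (H * Δ * ρ) ≤ ‖H‖ * frob Δ := by
    calc frob (H * Δ * ρ) ≤ frob (H * Δ) * ‖ρ‖ := frob_mul_le_opnorm' _ _
      _ ≤ frob (H * Δ) := by nlinarith [frob_nonneg (H * Δ)]
      _ ≤ ‖H‖ * frob Δ := frob_mul_le_opnorm _ _
  have b2 : frob (Δ * S₁) ≤ ‖H‖ * frob Δ := by
    calc frob (Δ * S₁) ≤ frob Δ * ‖S₁‖ := frob_mul_le_opnorm' _ _
      _ ≤ ‖H‖ * frob Δ := by nlinarith
  have b3 : frob (U₂ * E) ≤ 2 * (‖H‖ * frob Δ) := by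
    have t1 : frob (Δᴴ * (H * U₁ * ρ)) ≤ ‖H‖ * frob Δ := by
      calc frob (Δᴴ * (H * U₁ * ρ)) ≤ frob Δᴴ * ‖H * U₁ * ρ‖ := frob_mul_le_opnorm' _ _
        _ = frob Δ * ‖H * U₁ * ρ‖ := by rw [frob_conjTranspose]
        _ ≤ ‖H‖ * frob Δ := by nlinarith [norm_nonneg (H * U₁ * ρ)]
    have t2 : frob (U₂ᴴ * H * Δ * ρ) ≤ ‖H‖ * frob Δ := by
      calc frob (U₂ᴴ * H * Δ * ρ) ≤ frob (U₂ᴴ * H * Δ) * ‖ρ‖ := frob_mul_le_opnorm' _ _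
        _ ≤ frob (U₂ᴴ * H * Δ) := by nlinarith [frob_nonneg (U₂ᴴ * H * Δ)]
        _ ≤ ‖U₂ᴴ * H‖ * frob Δ := frob_mul_le_opnorm _ _
        _ ≤ ‖H‖ * frob Δ := by nlinarith [norm_nonneg (U₂ᴴ * H)]
    have hEf : frob E ≤ 2 * (‖H‖ * frob Δ) := by
      rw [hEdef]
      calc frob (msym (Δᴴ * (H * U₁ * ρ) + U₂ᴴ * H * Δ * ρ))
          ≤ frob (Δᴴ * (H * U₁ * ρ) + U₂ᴴ * H * Δ * ρ) := frob_msym_le _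
        _ ≤ frob (Δᴴ * (H * U₁ * ρ)) + frob (U₂ᴴ * H * Δ * ρ) := frob_add_le _ _
        _ ≤ 2 * (‖H‖ * frob Δ) := by linarith
    calc frob (U₂ * E) ≤ ‖U₂‖ * frob E := frob_mul_le_opnorm _ _
      _ ≤ 2 * (‖H‖ * frob Δ) := by nlinarith [frob_nonneg E]
  calc frob (H * Δ * ρ - Δ * S₁ - U₂ * E)
      ≤ frob (H * Δ * ρ - Δ * S₁) + frob (U₂ * E) := frob_sub_le _ _
    _ ≤ frob (H * Δ * ρ) + frob (Δ * S₁) + frob (U₂ * E) := by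
        linarith [frob_sub_le (H * Δ * ρ) (Δ * S₁)]
    _ ≤ 4 * ‖H‖ * frob Δ := by linarith
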